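/- Let σ = (σ_k)_{k≥1} be a nonincreasing nonnegative real sequence in ℓ², let α > 0 and θ ∈ (0,1). Then d^α(σ) ≤ θ^{−1} d^{θα}(σ), where d^δ(σ) := (δ² r_δ(σ) + τ_δ(σ)²)^{1/2}. -/

import Mathlib

/-- `r_δ(σ)`: the number of entries of `σ` exceeding `δ`. -/
noncomputable def rCount (σ : ℕ → ℝ) (δ : ℝ) : ℕ := {k : ℕ | δ < σ k}.ncard

/-- `τ_δ(σ)`: the ℓ²-norm of the tail of `σ` after the first `r_δ(σ)` entries. -/
noncomputable def tauTail (σ : ℕ → ℝ) (δ : ℝ) : ℝ :=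
  Real.sqrt (∑' k : ℕ, if rCount σ δ ≤ k then σ k ^ 2 else 0)

/-- `d^δ(σ) := (δ² r_δ(σ) + τ_δ(σ)²)^{1/2}`. -/
noncomputable def dThresh (σ : ℕ → ℝ) (δ : ℝ) : ℝ :=
  Real.sqrt (δ ^ 2 * (rCount σ δ : ℝ) + tauTail σ δ ^ 2)

lemma sumSq (σ : ℕ → ℝ) (hpos : ∀ k, 0 ≤ σ k) (hl2 : Memℓp σ 2) :
    Summable fun k => σ k ^ 2 := by
  have h := hl2.summable (p := 2) (by norm_num)
  refine h.congr fun k => ?_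
  rw [Real.norm_eq_abs, abs_of_nonneg (hpos k)]
  rw [show (ENNReal.toReal 2) = (2 : ℝ) by norm_num, Real.rpow_two]

lemma finite_S (σ : ℕ → ℝ) (hσ2 : Summable fun k => σ k ^ 2)
    {δ : ℝ} (hδ : 0 < δ) : {k : ℕ | δ < σ k}.Finite := by
  have h0 := hσ2.tendsto_atTop_zero
  have hev : ∀ᶠ k in Filter.atTop, σ k ^ 2 < δ ^ 2 :=
    h0.eventually (gt_mem_nhds (by positivity))
  obtain ⟨N, hN⟩ := hev.exists_forall_of_atTop
  apply Set.Finite.subset (Set.finite_Iio N)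
  intro k hk
  by_contra hkN
  have hk' : N ≤ k := le_of_not_gt hkN
  have h1 := hN k hk'
  have h2 : δ < σ k := hk
  nlinarith

lemma lt_rCount (σ : ℕ → ℝ) (hanti : Antitone σ) {δ : ℝ}
    (hfin : {k : ℕ | δ < σ k}.Finite) {k : ℕ} (hk : δ < σ k) : k < rCount σ δ := by
  have hsub : Finset.range (k + 1) ⊆ hfin.toFinset := by
    intro j hj
    have hj' : j ≤ k := by
      have := Finset.mem_range.mp hj; omega
    simp only [Set.Finite.mem_toFinset, Set.mem_setOf_eq]
    exact lt_of_lt_of_le hk (hanti hj')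
  have hcard := Finset.card_le_card hsub
  rw [Finset.card_range] at hcard
  rw [rCount, Set.ncard_eq_toFinset_card _ hfin]
  omega

lemma sigma_le (σ : ℕ → ℝ) (hanti : Antitone σ) {δ : ℝ}
    (hfin : {k : ℕ | δ < σ k}.Finite) {k : ℕ} (hk : rCount σ δ ≤ k) : σ k ≤ δ := by
  by_contra h
  exact absurd hk (not_le.mpr (lt_rCount σ hanti hfin (lt_of_not_ge h)))

lemma tailSummable (σ : ℕ → ℝ) (hσ2 : Summable fun k => σ k ^ 2) (m : ℕ) :
    Summable (fun k => if m ≤ k then σ k ^ 2 else 0) := by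
  refine Summable.of_nonneg_of_le (fun k => ?_) (fun k => ?_) hσ2
  · split <;> positivity
  · split
    · exact le_rfl
    · positivity

lemma tailNonneg (σ : ℕ → ℝ) (m : ℕ) :
    0 ≤ ∑' k, (if m ≤ k then σ k ^ 2 else 0) := by
  apply tsum_nonneg
  intro k; split <;> positivity

/-- **Limited decay of the thresholding error:** `d^α(σ) ≤ θ⁻¹ d^{θα}(σ)` for `θ ∈ (0,1)`. -/
theorem dThresh_inverse_bound (σ : ℕ → ℝ) (hanti : Antitone σ) (hpos : ∀ k, 0 ≤ σ k)
    (hl2 : Memℓp σ 2) (α θ : ℝ) (hα : 0 < α) (hθ0 : 0 < θ) (hθ1 : θ < 1) :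
    dThresh σ α ≤ θ⁻¹ * dThresh σ (θ * α) := by
  have hσ2 : Summable fun k => σ k ^ 2 := sumSq σ hpos hl2
  have hθα : 0 < θ * α := mul_pos hθ0 hα
  have hfinα : {k : ℕ | α < σ k}.Finite := finite_S σ hσ2 hα
  have hfinθ : {k : ℕ | θ * α < σ k}.Finite := finite_S σ hσ2 hθα
  set r := rCount σ α with hr
  set r' := rCount σ (θ * α) with hr'
  have hrr' : r ≤ r' := by
    rw [hr, hr', rCount, rCount]
    apply Set.ncard_le_ncard _ hfinθ
    intro k hk
    simp only [Set.mem_setOf_eq] at *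
    nlinarith
  set T : ℕ → ℝ := fun m => ∑' k, (if m ≤ k then σ k ^ 2 else 0) with hT
  have hTnn : ∀ m, 0 ≤ T m := fun m => tailNonneg σ m
  -- split T r = T r' + sum over Ico
  have hptw : ∀ k, (if r ≤ k then σ k ^ 2 else 0)
      = (if r' ≤ k then σ k ^ 2 else 0) + (if k ∈ Finset.Ico r r' then σ k ^ 2 else 0) := by
    intro k
    by_cases h1 : r ≤ k
    · by_cases h2 : r' ≤ k
      · simp [h1, h2, Finset.mem_Ico, not_lt.mpr h2]
      · simp [h1, h2, Finset.mem_Ico, lt_of_not_ge h2]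
    · have h2 : ¬ r' ≤ k := fun h => h1 (le_trans hrr' h)
      simp [h1, h2, Finset.mem_Ico]
  have hsum2 : Summable fun k => (if k ∈ Finset.Ico r r' then σ k ^ 2 else 0 : ℝ) :=
    summable_of_ne_finset_zero (s := Finset.Ico r r') (fun k hk => if_neg hk)
  have hTsplit : T r = T r' + ∑ k ∈ Finset.Ico r r', σ k ^ 2 := by
    have h1 : T r = ∑' k, ((if r' ≤ k then σ k ^ 2 else 0)
        + (if k ∈ Finset.Ico r r' then σ k ^ 2 else 0)) := tsum_congr hptw
    rw [h1, Summable.tsum_add (tailSummable σ hσ2 r') hsum2,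
      tsum_eq_sum (s := Finset.Ico r r') (fun k hk => if_neg hk)]
    congr 1
    exact Finset.sum_congr rfl fun k hk => if_pos hk
  -- bound the middle sum
  have hmid : ∑ k ∈ Finset.Ico r r', σ k ^ 2 ≤ ((r' : ℝ) - r) * α ^ 2 := by
    have hle : ∀ k ∈ Finset.Ico r r', σ k ^ 2 ≤ α ^ 2 := by
      intro k hk
      rw [Finset.mem_Ico] at hk
      have h1 : σ k ≤ α := sigma_le σ hanti hfinα hk.1
      nlinarith [hpos k]
    calc ∑ k ∈ Finset.Ico r r', σ k ^ 2 ≤ ∑ _k ∈ Finset.Ico r r', α ^ 2 :=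
          Finset.sum_le_sum hle
      _ = ((r' : ℝ) - r) * α ^ 2 := by
          rw [Finset.sum_const, Nat.card_Ico, nsmul_eq_mul, Nat.cast_sub hrr']
  -- key inequality on squares
  have hkey : α ^ 2 * (r : ℝ) + T r ≤ θ⁻¹ ^ 2 * ((θ * α) ^ 2 * (r' : ℝ) + T r') := by
    have hθinv : (1 : ℝ) ≤ θ⁻¹ ^ 2 := by
      have h1 : (1 : ℝ) ≤ θ⁻¹ := by
        rw [le_inv_comm₀ one_pos hθ0]; simpa using hθ1.le
      nlinarith
    have e1 : θ⁻¹ ^ 2 * (θ * α) ^ 2 = α ^ 2 := by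
      field_simp
    have h2 : α ^ 2 * (r : ℝ) + T r ≤ α ^ 2 * (r' : ℝ) + T r' := by
      rw [hTsplit]
      nlinarith [hmid]
    calc α ^ 2 * (r : ℝ) + T r ≤ α ^ 2 * (r' : ℝ) + T r' := h2
      _ ≤ θ⁻¹ ^ 2 * ((θ * α) ^ 2 * (r' : ℝ) + T r') := by
          rw [mul_add, ← mul_assoc, e1]
          have := hTnn r'
          nlinarith
  -- conclude via sqrt
  have htau1 : tauTail σ α ^ 2 = T r := by
    rw [tauTail, Real.sq_sqrt (tailNonneg σ _)]
  have htau2 : tauTail σ (θ * α) ^ 2 = T r' := by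
    rw [tauTail, Real.sq_sqrt (tailNonneg σ _)]
  rw [dThresh, dThresh, htau1, htau2]
  have heq : θ⁻¹ * Real.sqrt ((θ * α) ^ 2 * (r' : ℝ) + T r')
      = Real.sqrt (θ⁻¹ ^ 2 * ((θ * α) ^ 2 * (r' : ℝ) + T r')) := by
    rw [Real.sqrt_mul (by positivity), Real.sqrt_sq (by positivity)]
  rw [heq]
  exact Real.sqrt_le_sqrt hkey
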